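/- In the equilateral-triangle configuration with side length ℓ > 0, for each j ∈ {0,1,2}: the reveal point z_j is lightlike separated from both y_j and y_{j+1 mod 3} (the time difference ℓ/2 equals the spatial distance ℓ/2 in each case), so y_j ≼ z_j and y_{j+1 mod 3} ≼ z_j; consequently every pair of the causal diamonds D_j = D(y_j, z_j) is causally related (for each pair i ≠ j, there is a causal curve from D_i to D_j or from D_j to D_i). Moreover, ¬(y_j ≼ z_{j+1 mod 3}), since the spatial distance from a vertex of an equilateral triangle to the midpoint of the opposite side is (√3/2)ℓ > ℓ/2. -/

import Mathlib

/-- The causal relation on (2+1)-dimensional Minkowski space (units with `c = 1`):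
`(t, x) ≼ (s, y)` iff `s - t ≥ ‖y - x‖`. -/
def causal (p q : ℝ × EuclideanSpace ℝ (Fin 2)) : Prop :=
  ‖q.2 - p.2‖ ≤ q.1 - p.1

/-- The causal diamond `D(y,z)`. -/
def diamond (y z : ℝ × EuclideanSpace ℝ (Fin 2)) : Set (ℝ × EuclideanSpace ℝ (Fin 2)) :=
  {p | causal y p ∧ causal p z}

/-- The call points: the vertices of an equilateral triangle of side `ℓ` at time `0`. -/
noncomputable def callPt (ℓ : ℝ) : Fin 3 → ℝ × EuclideanSpace ℝ (Fin 2) :=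
  ![(0, !₂[0, 0]), (0, !₂[ℓ, 0]), (0, !₂[ℓ / 2, Real.sqrt 3 / 2 * ℓ])]

/-- The reveal points: the midpoints of the edges of the triangle at time `ℓ / 2`,
`z j` over the midpoint of `y j` and `y (j+1)`. -/
noncomputable def revealPt (ℓ : ℝ) : Fin 3 → ℝ × EuclideanSpace ℝ (Fin 2) :=
  ![(ℓ / 2, !₂[ℓ / 2, 0]), (ℓ / 2, !₂[3 * ℓ / 4, Real.sqrt 3 / 4 * ℓ]),
    (ℓ / 2, !₂[ℓ / 4, Real.sqrt 3 / 4 * ℓ])]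

/-- In the equilateral-triangle configuration, each reveal point `z j` is lightlike
separated from both `y j` and `y (j+1)` (time difference `ℓ/2` equals spatial distance
`ℓ/2`), so `y j ≼ z j` and `y (j+1) ≼ z j`, while `¬ (y j ≼ z (j+1))`; and every pair
of the causal diamonds `D j = D(y j, z j)` is causally related. -/

lemma norm2 (x : EuclideanSpace ℝ (Fin 2)) : ‖x‖ = Real.sqrt ((x 0) ^ 2 + (x 1) ^ 2) := by
  rw [EuclideanSpace.norm_eq]; simp [Fin.sum_univ_two, sq_abs]

theorem equilateral_triangle_configuration (ℓ : ℝ) (hℓ : 0 < ℓ) :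
    (∀ j : Fin 3,
      ((revealPt ℓ j).1 - (callPt ℓ j).1 = ‖(revealPt ℓ j).2 - (callPt ℓ j).2‖ ∧
        (revealPt ℓ j).1 - (callPt ℓ j).1 = ℓ / 2 ∧
        ‖(revealPt ℓ j).2 - (callPt ℓ j).2‖ = ℓ / 2) ∧
      ((revealPt ℓ j).1 - (callPt ℓ (j + 1)).1 = ‖(revealPt ℓ j).2 - (callPt ℓ (j + 1)).2‖ ∧
        ‖(revealPt ℓ j).2 - (callPt ℓ (j + 1)).2‖ = ℓ / 2) ∧
      causal (callPt ℓ j) (revealPt ℓ j) ∧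
      causal (callPt ℓ (j + 1)) (revealPt ℓ j) ∧
      ¬ causal (callPt ℓ j) (revealPt ℓ (j + 1))) ∧
    (∀ i j : Fin 3, i ≠ j →
      ∃ p ∈ diamond (callPt ℓ i) (revealPt ℓ i),
        ∃ q ∈ diamond (callPt ℓ j) (revealPt ℓ j), causal p q ∨ causal q p) := by
  have h3 : Real.sqrt 3 ^ 2 = 3 := Real.sq_sqrt (by norm_num)
  have h1 : (1:ℝ) < Real.sqrt 3 := by nlinarith [Real.sqrt_nonneg 3]
  have sqrtHalf : ∀ x : ℝ, x = (ℓ/2)^2 → Real.sqrt x = ℓ/2 := fun x hx => by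
    rw [hx, Real.sqrt_sq (by linarith)]
  have n00 : ‖(revealPt ℓ 0).2 - (callPt ℓ 0).2‖ = ℓ/2 := by
    rw [norm2]; simp only [revealPt, callPt, Matrix.cons_val_zero, Matrix.cons_val_one,
      Matrix.head_cons, Matrix.cons_val_two, Matrix.tail_cons, PiLp.sub_apply, PiLp.toLp_apply]
    exact sqrtHalf _ (by ring)
  have n01 : ‖(revealPt ℓ 0).2 - (callPt ℓ 1).2‖ = ℓ/2 := by
    rw [norm2]; simp only [revealPt, callPt, Matrix.cons_val_zero, Matrix.cons_val_one,
      Matrix.head_cons, Matrix.cons_val_two, Matrix.tail_cons, PiLp.sub_apply, PiLp.toLp_apply]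
    exact sqrtHalf _ (by ring)
  have n11 : ‖(revealPt ℓ 1).2 - (callPt ℓ 1).2‖ = ℓ/2 := by
    rw [norm2]; simp only [revealPt, callPt, Matrix.cons_val_zero, Matrix.cons_val_one,
      Matrix.head_cons, Matrix.cons_val_two, Matrix.tail_cons, PiLp.sub_apply, PiLp.toLp_apply]
    exact sqrtHalf _ (by linear_combination (ℓ^2/16) * h3)
  have n12 : ‖(revealPt ℓ 1).2 - (callPt ℓ 2).2‖ = ℓ/2 := by
    rw [norm2]; simp only [revealPt, callPt, Matrix.cons_val_zero, Matrix.cons_val_one,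
      Matrix.head_cons, Matrix.cons_val_two, Matrix.tail_cons, PiLp.sub_apply, PiLp.toLp_apply]
    exact sqrtHalf _ (by linear_combination (ℓ^2/16) * h3)
  have n22 : ‖(revealPt ℓ 2).2 - (callPt ℓ 2).2‖ = ℓ/2 := by
    rw [norm2]; simp only [revealPt, callPt, Matrix.cons_val_zero, Matrix.cons_val_one,
      Matrix.head_cons, Matrix.cons_val_two, Matrix.tail_cons, PiLp.sub_apply, PiLp.toLp_apply]
    exact sqrtHalf _ (by linear_combination (ℓ^2/16) * h3)
  have n20 : ‖(revealPt ℓ 2).2 - (callPt ℓ 0).2‖ = ℓ/2 := by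
    rw [norm2]; simp only [revealPt, callPt, Matrix.cons_val_zero, Matrix.cons_val_one,
      Matrix.head_cons, Matrix.cons_val_two, Matrix.tail_cons, PiLp.sub_apply, PiLp.toLp_apply]
    exact sqrtHalf _ (by linear_combination (ℓ^2/16) * h3)
  have t0 : (revealPt ℓ 0).1 - (callPt ℓ 0).1 = ℓ/2 := by simp [revealPt, callPt]
  have t01 : (revealPt ℓ 0).1 - (callPt ℓ 1).1 = ℓ/2 := by simp [revealPt, callPt]
  have t11 : (revealPt ℓ 1).1 - (callPt ℓ 1).1 = ℓ/2 := by simp [revealPt, callPt]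
  have t12 : (revealPt ℓ 1).1 - (callPt ℓ 2).1 = ℓ/2 := by simp [revealPt, callPt]
  have t22 : (revealPt ℓ 2).1 - (callPt ℓ 2).1 = ℓ/2 := by simp [revealPt, callPt]
  have t20 : (revealPt ℓ 2).1 - (callPt ℓ 0).1 = ℓ/2 := by simp [revealPt, callPt]
  have t10 : (revealPt ℓ 1).1 - (callPt ℓ 0).1 = ℓ/2 := by simp [revealPt, callPt]
  have t21 : (revealPt ℓ 2).1 - (callPt ℓ 1).1 = ℓ/2 := by simp [revealPt, callPt]
  have t02 : (revealPt ℓ 0).1 - (callPt ℓ 2).1 = ℓ/2 := by simp [revealPt, callPt]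
  have m01 : ‖(revealPt ℓ 1).2 - (callPt ℓ 0).2‖ = Real.sqrt 3 / 2 * ℓ := by
    rw [norm2]; simp only [revealPt, callPt, Matrix.cons_val_zero, Matrix.cons_val_one,
      Matrix.head_cons, Matrix.cons_val_two, Matrix.tail_cons, PiLp.sub_apply, PiLp.toLp_apply]
    rw [show (3*ℓ/4 - 0)^2 + (Real.sqrt 3/4*ℓ - 0)^2 = (Real.sqrt 3/2*ℓ)^2 by
      linear_combination (-3*ℓ^2/16) * h3]
    exact Real.sqrt_sq (by nlinarith)
  have m12 : ‖(revealPt ℓ 2).2 - (callPt ℓ 1).2‖ = Real.sqrt 3 / 2 * ℓ := by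
    rw [norm2]; simp only [revealPt, callPt, Matrix.cons_val_zero, Matrix.cons_val_one,
      Matrix.head_cons, Matrix.cons_val_two, Matrix.tail_cons, PiLp.sub_apply, PiLp.toLp_apply]
    rw [show (ℓ/4 - ℓ)^2 + (Real.sqrt 3/4*ℓ - 0)^2 = (Real.sqrt 3/2*ℓ)^2 by
      linear_combination (-3*ℓ^2/16) * h3]
    exact Real.sqrt_sq (by nlinarith)
  have m20 : ‖(revealPt ℓ 0).2 - (callPt ℓ 2).2‖ = Real.sqrt 3 / 2 * ℓ := by
    rw [norm2]; simp only [revealPt, callPt, Matrix.cons_val_zero, Matrix.cons_val_one,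
      Matrix.head_cons, Matrix.cons_val_two, Matrix.tail_cons, PiLp.sub_apply, PiLp.toLp_apply]
    rw [show (ℓ/2 - ℓ/2)^2 + (0 - Real.sqrt 3/2*ℓ)^2 = (Real.sqrt 3/2*ℓ)^2 by ring]
    exact Real.sqrt_sq (by nlinarith)
  have big : √3/2*ℓ > ℓ/2 := by nlinarith
  have c00 : causal (callPt ℓ 0) (revealPt ℓ 0) := by rw [causal, n00, t0]
  have c10 : causal (callPt ℓ 1) (revealPt ℓ 0) := by rw [causal, n01, t01]
  have c11 : causal (callPt ℓ 1) (revealPt ℓ 1) := by rw [causal, n11, t11]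
  have c21 : causal (callPt ℓ 2) (revealPt ℓ 1) := by rw [causal, n12, t12]
  have c22 : causal (callPt ℓ 2) (revealPt ℓ 2) := by rw [causal, n22, t22]
  have c02 : causal (callPt ℓ 0) (revealPt ℓ 2) := by rw [causal, n20, t20]
  have crefl : ∀ p : ℝ × EuclideanSpace ℝ (Fin 2), causal p p := fun p => by
    simp [causal]
  have dy : ∀ k : Fin 3, causal (callPt ℓ k) (revealPt ℓ k) →
      callPt ℓ k ∈ diamond (callPt ℓ k) (revealPt ℓ k) := fun k h => ⟨crefl _, h⟩
  have dz : ∀ k : Fin 3, causal (callPt ℓ k) (revealPt ℓ k) →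
      revealPt ℓ k ∈ diamond (callPt ℓ k) (revealPt ℓ k) := fun k h => ⟨h, crefl _⟩
  have neg0 : ¬ causal (callPt ℓ 0) (revealPt ℓ 1) := by
    rw [causal, m01, t10]; linarith
  have neg1 : ¬ causal (callPt ℓ 1) (revealPt ℓ 2) := by
    rw [causal, m12, t21]; linarith
  have neg2 : ¬ causal (callPt ℓ 2) (revealPt ℓ 0) := by
    rw [causal, m20, t02]; linarith
  constructor
  · intro j
    fin_cases j
    · exact ⟨⟨t0.trans n00.symm, t0, n00⟩, ⟨t01.trans n01.symm, n01⟩, c00, c10, neg0⟩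
    · exact ⟨⟨t11.trans n11.symm, t11, n11⟩, ⟨t12.trans n12.symm, n12⟩, c11, c21, neg1⟩
    · exact ⟨⟨t22.trans n22.symm, t22, n22⟩, ⟨t20.trans n20.symm, n20⟩, c22, c02, neg2⟩
  · intro i j hij
    fin_cases i <;> fin_cases j
    · exact absurd rfl hij
    · exact ⟨revealPt ℓ 0, dz 0 c00, callPt ℓ 1, dy 1 c11, Or.inr c10⟩
    · exact ⟨callPt ℓ 0, dy 0 c00, revealPt ℓ 2, dz 2 c22, Or.inl c02⟩
    · exact ⟨callPt ℓ 1, dy 1 c11, revealPt ℓ 0, dz 0 c00, Or.inl c10⟩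
    · exact absurd rfl hij
    · exact ⟨revealPt ℓ 1, dz 1 c11, callPt ℓ 2, dy 2 c22, Or.inr c21⟩
    · exact ⟨revealPt ℓ 2, dz 2 c22, callPt ℓ 0, dy 0 c00, Or.inr c02⟩
    · exact ⟨callPt ℓ 2, dy 2 c22, revealPt ℓ 1, dz 1 c11, Or.inl c21⟩
    · exact absurd rfl hij
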